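/- Let $K \ge 1$, let $(p_0,\dots,p_K)$ be a probability vector with all entries strictly positive, and for each $i$ let $S_i(x) = a_i + b_i x$ with $0 \le a_i$, $a_i + b_i \le 1$, $0 \le b_i \le 1$, and not all $b_i = 1$. Let $(B_t)_{t \ge 1}$ be IID with $P(B_1 = i) = p_i$, and let $N_{t,i} = |\{s \le t : B_s = i\}|$. Define $\tilde\Theta_t = \sum_{s=1}^t a_{B_s}\prod_{i=0}^K b_i^{N_{s-1,i}} + \Theta_0 \prod_{i=0}^K b_i^{N_{t,i}}$ for a fixed $\Theta_0 \in [0,1]$. Then $\tilde\Theta_t$ converges almost surely as $t \to \infty$ to $\tilde\Theta_\infty = \sum_{s=1}^\infty a_{B_s}\prod_{i=0}^K b_i^{N_{s-1,i}}$, and $E|\tilde\Theta_t - \tilde\Theta_\infty| \le \rho^t \frac{2-\rho}{1-\rho}$ where $\rho = \sum_{i=0}^K p_i b_i < 1$. -/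

import Mathlib

open MeasureTheory Set Filter

/-- a.s. convergence of `Θ̃_t` to the series `Θ̃_∞` and the `L¹` error
bound `E|Θ̃_t - Θ̃_∞| ≤ ρ^t (2-ρ)/(1-ρ)` with `ρ = ∑ᵢ pᵢ bᵢ < 1`. -/
theorem stmt15
    {Ω : Type*} [MeasurableSpace Ω] (P : Measure Ω) [IsProbabilityMeasure P]
    (K : ℕ) (hK : 1 ≤ K)
    (p a b : Fin (K + 1) → ℝ)
    (hppos : ∀ i, 0 < p i) (hpsum : ∑ i, p i = 1)
    (ha : ∀ i, 0 ≤ a i) (hb : ∀ i, 0 ≤ b i) (hab : ∀ i, a i + b i ≤ 1)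
    (hbne : ∃ i, b i < 1)
    (B : ℕ → Ω → Fin (K + 1)) (hBmeas : ∀ t, Measurable (B t))
    (hBindep : ProbabilityTheory.iIndepFun B P)
    (hBlaw : ∀ t i, P {ω | B t ω = i} = ENNReal.ofReal (p i))
    (Θ₀ : ℝ) (hΘ₀ : Θ₀ ∈ Set.Icc (0:ℝ) 1)
    (N : ℕ → Fin (K + 1) → Ω → ℕ)
    (hN : ∀ t i ω, N t i ω = ((Finset.range t).filter (fun s => B (s + 1) ω = i)).card)
    (Θt : ℕ → Ω → ℝ)
    (hΘt : ∀ t ω, Θt t ω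
      = (∑ s ∈ Finset.range t, a (B (s + 1) ω) * ∏ i, b i ^ N s i ω)
        + Θ₀ * ∏ i, b i ^ N t i ω)
    (Θinf : Ω → ℝ)
    (hΘinf : ∀ ω, Θinf ω = ∑' s : ℕ, a (B (s + 1) ω) * ∏ i, b i ^ N s i ω)
    (ρ : ℝ) (hρ : ρ = ∑ i, p i * b i) :
    ρ < 1 ∧
    (∀ᵐ ω ∂P, Tendsto (fun t => Θt t ω) atTop (nhds (Θinf ω))) ∧
    (∀ t, ∫ ω, |Θt t ω - Θinf ω| ∂P ≤ ρ ^ t * (2 - ρ) / (1 - ρ)) := by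
  classical
  have hb1 : ∀ i, b i ≤ 1 := fun i => le_trans (le_add_of_nonneg_left (ha i)) (hab i)
  have hbmeas : Measurable b := measurable_of_countable b
  -- the random variables X r = b (B r)
  set X : ℕ → Ω → ℝ := fun r ω => b (B r ω) with hXdef
  have hXmeas : ∀ r, Measurable (X r) := fun r => hbmeas.comp (hBmeas r)
  have hXnonneg : ∀ r ω, 0 ≤ X r ω := fun r ω => hb _
  have hXle1 : ∀ r ω, X r ω ≤ 1 := fun r ω => hb1 _
  -- the weights W t = ∏_{r<t} X (r+1)
  set W : ℕ → Ω → ℝ := fun t ω => ∏ r ∈ Finset.range t, X (r + 1) ω with hWdef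
  have hWnonneg : ∀ t ω, 0 ≤ W t ω := fun t ω =>
    Finset.prod_nonneg fun r _ => hXnonneg _ _
  have hWle1 : ∀ t ω, W t ω ≤ 1 := fun t ω =>
    Finset.prod_le_one (fun r _ => hXnonneg _ _) (fun r _ => hXle1 _ _)
  have hWmeas : ∀ t, Measurable (W t) := fun t =>
    Finset.measurable_prod _ fun r _ => hXmeas _
  have hWint : ∀ t, Integrable (W t) P := by
    intro t
    refine (integrable_const (1 : ℝ)).mono' (hWmeas t).aestronglyMeasurable ?_
    exact ae_of_all _ fun ω => by
      rw [Real.norm_eq_abs, abs_of_nonneg (hWnonneg t ω)]; exact hWle1 t ω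
  have hXint : ∀ r, Integrable (X r) P := by
    intro r
    refine (integrable_const (1 : ℝ)).mono' (hXmeas r).aestronglyMeasurable ?_
    exact ae_of_all _ fun ω => by
      rw [Real.norm_eq_abs, abs_of_nonneg (hXnonneg r ω)]; exact hXle1 r ω
  have hWsucc : ∀ t ω, W (t + 1) ω = W t ω * X (t + 1) ω := fun t ω =>
    Finset.prod_range_succ _ _
  have hWanti : ∀ ω, Antitone fun t => W t ω := by
    intro ω
    refine antitone_nat_of_succ_le fun t => ?_
    rw [hWsucc]
    calc W t ω * X (t + 1) ω ≤ W t ω * 1 :=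
          mul_le_mul_of_nonneg_left (hXle1 _ _) (hWnonneg _ _)
      _ = W t ω := mul_one _
  -- the product of powers equals W
  have hWN : ∀ t ω, (∏ i, b i ^ N t i ω) = W t ω := by
    intro t ω
    simp only [hN, hWdef]
    rw [← Finset.prod_fiberwise' (Finset.range t) (fun s => B (s + 1) ω) b]
    exact Finset.prod_congr rfl fun i _ => (Finset.prod_const _).symm
  -- ρ facts
  have hρ0 : 0 ≤ ρ := by
    rw [hρ]; exact Finset.sum_nonneg fun i _ => mul_nonneg (hppos i).le (hb i)
  obtain ⟨i₀, hi₀⟩ := hbne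
  have hρ1 : ρ < 1 := by
    rw [hρ, ← hpsum]
    refine Finset.sum_lt_sum (fun i _ => mul_le_of_le_one_right (hppos i).le (hb1 i))
      ⟨i₀, Finset.mem_univ _, mul_lt_of_lt_one_right (hppos i₀) hi₀⟩
  -- expectation of X r
  have hEX : ∀ r, ∫ ω, X r ω ∂P = ρ := by
    intro r
    have hmap : IsProbabilityMeasure (P.map (B r)) :=
      Measure.isProbabilityMeasure_map (hBmeas r).aemeasurable
    have h1 : ∫ ω, X r ω ∂P = ∫ x, b x ∂(P.map (B r)) :=
      (integral_map (hBmeas r).aemeasurable hbmeas.aestronglyMeasurable).symm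
    rw [h1, integral_fintype (Integrable.of_finite), hρ]
    refine Finset.sum_congr rfl fun i _ => ?_
    have h2 : (P.map (B r)) {i} = ENNReal.ofReal (p i) := by
      rw [Measure.map_apply (hBmeas r) (measurableSet_singleton i), ← hBlaw r i]
      rfl
    rw [measureReal_def, h2, ENNReal.toReal_ofReal (hppos i).le, smul_eq_mul]
  -- independence of X's
  have hXindep : ProbabilityTheory.iIndepFun X P :=
    hBindep.comp (fun _ => b) (fun _ => hbmeas)
  -- expectation of W t
  have hEW : ∀ t, ∫ ω, W t ω ∂P = ρ ^ t := by
    intro t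
    induction t with
    | zero => simp [hWdef]
    | succ t ih =>
      have hind : ProbabilityTheory.IndepFun (W t) (X (t + 1)) P := by
        have h := hXindep.indepFun_finsetProd_of_notMem (fun r => hXmeas r)
          (s := Finset.image (· + 1) (Finset.range t)) (i := t + 1)
          (by simp [Finset.mem_image])
        have h2 : (∏ j ∈ Finset.image (· + 1) (Finset.range t), X j) = W t := by
          rw [Finset.prod_image (by intro x _ y _ h; simpa using h)]
          funext ω
          rw [Finset.prod_apply]
        rwa [h2] at h
      have h3 : ∫ ω, W (t + 1) ω ∂P = ∫ ω, (W t * X (t + 1)) ω ∂P := by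
        refine integral_congr_ae (ae_of_all _ fun ω => ?_)
        rw [Pi.mul_apply, hWsucc]
      rw [h3, hind.integral_mul_eq_mul_integral (hWint t).aestronglyMeasurable (hXint (t + 1)).aestronglyMeasurable,
        hEX, ih, pow_succ]
  -- term bound for summability
  have hterm : ∀ s ω, a (B (s + 1) ω) * W s ω ≤ W s ω - W (s + 1) ω := by
    intro s ω
    have h1 : a (B (s + 1) ω) ≤ 1 - X (s + 1) ω := by
      have := hab (B (s + 1) ω); simp only [hXdef]; linarith
    calc a (B (s + 1) ω) * W s ω ≤ (1 - X (s + 1) ω) * W s ω :=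
          mul_le_mul_of_nonneg_right h1 (hWnonneg s ω)
      _ = W s ω - W (s + 1) ω := by rw [hWsucc]; ring
  have htermnonneg : ∀ s ω, 0 ≤ a (B (s + 1) ω) * W s ω := fun s ω =>
    mul_nonneg (ha _) (hWnonneg _ _)
  have hW0 : ∀ ω, W 0 ω = 1 := fun ω => Finset.prod_range_zero _
  have hsumm : ∀ ω, Summable (fun s => a (B (s + 1) ω) * W s ω) := by
    intro ω
    refine summable_of_sum_range_le (c := 1) (fun s => htermnonneg s ω) fun n => ?_
    calc ∑ s ∈ Finset.range n, a (B (s + 1) ω) * W s ω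
        ≤ ∑ s ∈ Finset.range n, (W s ω - W (s + 1) ω) :=
          Finset.sum_le_sum fun s _ => hterm s ω
      _ = W 0 ω - W n ω := Finset.sum_range_sub' (fun s => W s ω) n
      _ ≤ 1 := by rw [hW0]; linarith [hWnonneg n ω]
  -- tail bound
  have htail : ∀ t ω, (∑' s, a (B (s + t + 1) ω) * W (s + t) ω) ≤ W t ω := by
    intro t ω
    refine Real.tsum_le_of_sum_range_le (fun s => htermnonneg _ ω) fun n => ?_
    calc ∑ s ∈ Finset.range n, a (B (s + t + 1) ω) * W (s + t) ω
        ≤ ∑ s ∈ Finset.range n, (W (s + t) ω - W (s + 1 + t) ω) := by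
          refine Finset.sum_le_sum fun s _ => ?_
          have := hterm (s + t) ω
          have he : s + 1 + t = s + t + 1 := by omega
          rw [he]; exact this
      _ = W (0 + t) ω - W (n + t) ω := by
          have := Finset.sum_range_sub' (fun s => W (s + t) ω) n
          simpa using this
      _ ≤ W t ω := by
          simp only [Nat.zero_add]
          linarith [hWnonneg (n + t) ω]
  have htailnonneg : ∀ t ω, 0 ≤ ∑' s, a (B (s + t + 1) ω) * W (s + t) ω :=
    fun t ω => tsum_nonneg fun s => htermnonneg _ ω
  -- decomposition of the difference
  have hdiff : ∀ t ω, Θt t ω - Θinf ω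
      = Θ₀ * W t ω - ∑' s, a (B (s + t + 1) ω) * W (s + t) ω := by
    intro t ω
    have hsplit := Summable.sum_add_tsum_nat_add t (hsumm ω)
    rw [hΘt, hΘinf, hWN]
    have h1 : (∑ s ∈ Finset.range t, a (B (s + 1) ω) * ∏ i, b i ^ N s i ω)
        = ∑ s ∈ Finset.range t, a (B (s + 1) ω) * W s ω :=
      Finset.sum_congr rfl fun s _ => by rw [hWN]
    have h2 : (∑' s : ℕ, a (B (s + 1) ω) * ∏ i, b i ^ N s i ω)
        = ∑' s : ℕ, a (B (s + 1) ω) * W s ω := by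
      refine tsum_congr fun s => by rw [hWN]
    rw [h1, h2, ← hsplit]
    ring
  -- absolute bound
  have habs : ∀ t ω, |Θt t ω - Θinf ω| ≤ 2 * W t ω := by
    intro t ω
    rw [hdiff t ω, abs_le]
    constructor
    · have h1 := htail t ω
      have h2 : 0 ≤ Θ₀ * W t ω := mul_nonneg hΘ₀.1 (hWnonneg t ω)
      linarith [hWnonneg t ω]
    · have h1 := htailnonneg t ω
      have h2 : Θ₀ * W t ω ≤ 1 * W t ω :=
        mul_le_mul_of_nonneg_right hΘ₀.2 (hWnonneg t ω)
      linarith [hWnonneg t ω]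
  -- a.s. convergence of W to 0
  have hLtend : ∀ ω, Tendsto (fun t => W t ω) atTop (nhds (⨅ t, W t ω)) := by
    intro ω
    exact tendsto_atTop_ciInf (hWanti ω) ⟨0, fun x ⟨t, ht⟩ => ht ▸ hWnonneg t ω⟩
  set L : Ω → ℝ := fun ω => ⨅ t, W t ω with hLdef
  have hLmeas : Measurable L :=
    measurable_of_tendsto_metrizable' atTop hWmeas
      (tendsto_pi_nhds.2 fun ω => hLtend ω)
  have hLbdd : ∀ ω, BddBelow (Set.range fun t => W t ω) := fun ω =>
    ⟨0, fun x ⟨t, ht⟩ => ht ▸ hWnonneg t ω⟩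
  have hL0 : ∀ ω, 0 ≤ L ω := fun ω =>
    le_ciInf fun t => hWnonneg t ω
  have hLle : ∀ t ω, L ω ≤ W t ω := fun t ω => ciInf_le (hLbdd ω) t
  have hLint : Integrable L P := by
    refine (integrable_const (1 : ℝ)).mono' hLmeas.aestronglyMeasurable ?_
    exact ae_of_all _ fun ω => by
      rw [Real.norm_eq_abs, abs_of_nonneg (hL0 ω)]
      exact le_trans (hLle 0 ω) (hWle1 0 ω)
  have hIL : ∫ ω, L ω ∂P = 0 := by
    have hle : ∀ t, ∫ ω, L ω ∂P ≤ ρ ^ t := by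
      intro t
      calc ∫ ω, L ω ∂P ≤ ∫ ω, W t ω ∂P :=
            integral_mono hLint (hWint t) fun ω => hLle t ω
        _ = ρ ^ t := hEW t
    have h0 : ∫ ω, L ω ∂P ≤ 0 :=
      ge_of_tendsto' (tendsto_pow_atTop_nhds_zero_of_lt_one hρ0 hρ1) hle
    exact le_antisymm h0 (integral_nonneg hL0)
  have hLae : ∀ᵐ ω ∂P, L ω = 0 := by
    have := (integral_eq_zero_iff_of_nonneg hL0 hLint).mp hIL
    filter_upwards [this] with ω hω using hω
  refine ⟨hρ1, ?_, ?_⟩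
  · -- a.s. convergence
    filter_upwards [hLae] with ω hω
    have hWt0 : Tendsto (fun t => W t ω) atTop (nhds 0) := by
      have := hLtend ω
      rwa [show (⨅ t, W t ω) = 0 from hω] at this
    have h1 : Tendsto (fun t => ∑ s ∈ Finset.range t, a (B (s + 1) ω) * W s ω)
        atTop (nhds (Θinf ω)) := by
      have h2 : Θinf ω = ∑' s : ℕ, a (B (s + 1) ω) * W s ω := by
        rw [hΘinf]; exact tsum_congr fun s => by rw [hWN]
      rw [h2]
      exact (hsumm ω).hasSum.tendsto_sum_nat
    have h3 : Tendsto (fun t => Θ₀ * W t ω) atTop (nhds 0) := by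
      simpa using hWt0.const_mul Θ₀
    have h4 := h1.add h3
    rw [add_zero] at h4
    refine h4.congr fun t => ?_
    rw [hΘt, hWN]
    exact congrArg (· + Θ₀ * W t ω)
      (Finset.sum_congr rfl fun s _ => by rw [hWN]).symm
  · -- L¹ bound
    intro t
    have h1 : ∫ ω, |Θt t ω - Θinf ω| ∂P ≤ ∫ ω, 2 * W t ω ∂P := by
      refine integral_mono_of_nonneg (ae_of_all _ fun ω => abs_nonneg _)
        ((hWint t).const_mul 2) (ae_of_all _ fun ω => habs t ω)
    have h2 : ∫ ω, 2 * W t ω ∂P = 2 * ρ ^ t := by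
      rw [integral_const_mul, hEW]
    have h3 : 2 * ρ ^ t ≤ ρ ^ t * (2 - ρ) / (1 - ρ) := by
      rw [le_div_iff₀ (by linarith : (0:ℝ) < 1 - ρ)]
      nlinarith [pow_nonneg hρ0 t, mul_nonneg hρ0 (pow_nonneg hρ0 t)]
    linarith [h1, h2 ▸ h1]
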